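/- Let p(x) = aₙxⁿ + ⋯ + a₀ and q(x) = bₘxᵐ + ⋯ + b₀ be polynomials in ℂ[x] with aₙ·bₘ ≠ 0, and let k be a nonnegative integer with k ≤ (n+m)/2. Then p and q have exactly k common roots counting multiplicity (equivalently, the degree of gcd(p,q) equals k) if and only if R₀(p,q) = R₁(p,q) = ⋯ = R_{k−1}(p,q) = 0 and R_k(p,q) ≠ 0. -/

import Mathlib

/-- The Sylvester matrix of two polynomials of formal degrees `n` and `m`,
given by their coefficient functions `P` and `Q` (`P i` is the coefficient of
`xⁱ`).  Its first `m` rows contain the coefficient vector `(P n, …, P 0)`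
successively shifted to the right (row `i` has `P n` in column `i`), and its
last `n` rows contain the coefficient vector `(Q m, …, Q 0)` in reversed shift
order (row `m + t`, `0 ≤ t < n`, has `Q m` in column `n - 1 - t`). -/
def sylvesterMat {R : Type*} [CommRing R] (n m : ℕ) (P Q : ℕ → R) :
    Matrix (Fin (n + m)) (Fin (n + m)) R :=
  Matrix.of fun i s =>
    if (i : ℕ) < m then
      (if (i : ℕ) ≤ (s : ℕ) ∧ (s : ℕ) ≤ (i : ℕ) + n then
        P (n - ((s : ℕ) - (i : ℕ))) else 0)
    else
      (if n - 1 - ((i : ℕ) - m) ≤ (s : ℕ) ∧ (s : ℕ) ≤ n - 1 - ((i : ℕ) - m) + m then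
        Q (m + n - 1 - ((i : ℕ) - m) - (s : ℕ)) else 0)

/-- The `k`-subresultant of two polynomials of formal degrees `n` and `m`:
the determinant of the matrix obtained from the Sylvester matrix by deleting
its first `k` and last `k` rows and its first `k` and last `k` columns. -/
def subresultant {R : Type*} [CommRing R] (n m : ℕ) (P Q : ℕ → R) (k : ℕ) : R :=
  Matrix.det (Matrix.of fun r c : Fin (n + m - 2 * k) =>
    sylvesterMat n m P Q
      ⟨k + (r : ℕ), by have := r.isLt; omega⟩
      ⟨k + (c : ℕ), by have := c.isLt; omega⟩)

open Polynomial Finset Matrix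

namespace SubresAux

noncomputable def uP (n m k : ℕ) (c : Fin (n + m - 2 * k) → ℂ) : Polynomial ℂ :=
  ∑ r : Fin (n + m - 2 * k), if (r : ℕ) < m - k then C (c r) * X ^ (m - k - 1 - (r : ℕ)) else 0

noncomputable def vP (n m k : ℕ) (c : Fin (n + m - 2 * k) → ℂ) : Polynomial ℂ :=
  ∑ r : Fin (n + m - 2 * k), if m - k ≤ (r : ℕ) then C (c r) * X ^ ((r : ℕ) - (m - k)) else 0

lemma coeff_uP {n m k : ℕ} (hkn : k ≤ n) (c : Fin (n + m - 2 * k) → ℂ) (j : ℕ) :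
    (uP n m k c).coeff j = if h : j < m - k then c ⟨m - k - 1 - j, by omega⟩ else 0 := by
  unfold uP
  rw [finset_sum_coeff]
  split
  · rename_i h
    rw [Finset.sum_eq_single (⟨m - k - 1 - j, by omega⟩ : Fin (n + m - 2 * k))]
    · rw [if_pos (show m - k - 1 - j < m - k by omega)]
      simp only [coeff_C_mul, coeff_X_pow]
      rw [if_pos (show j = m - k - 1 - (m - k - 1 - j) by omega), mul_one]
    · intro b _ hb
      split
      · rename_i hb2
        simp only [coeff_C_mul, coeff_X_pow]
        rw [if_neg, mul_zero]
        intro hj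
        apply hb
        apply Fin.ext
        simp
        omega
      · simp
    · simp
  · rename_i h
    apply Finset.sum_eq_zero
    intro b _
    split
    · simp only [coeff_C_mul, coeff_X_pow]
      rw [if_neg (by omega), mul_zero]
    · simp

lemma coeff_vP {n m k : ℕ} (hkm : k ≤ m) (c : Fin (n + m - 2 * k) → ℂ) (j : ℕ) :
    (vP n m k c).coeff j = if h : j < n - k then c ⟨m - k + j, by omega⟩ else 0 := by
  unfold vP
  rw [finset_sum_coeff]
  split
  · rename_i h
    rw [Finset.sum_eq_single (⟨m - k + j, by omega⟩ : Fin (n + m - 2 * k))]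
    · rw [if_pos (show m - k ≤ m - k + j by omega)]
      simp only [coeff_C_mul, coeff_X_pow]
      rw [if_pos (show j = m - k + j - (m - k) by omega), mul_one]
    · intro b _ hb
      split
      · rename_i hb2
        simp only [coeff_C_mul, coeff_X_pow]
        rw [if_neg, mul_zero]
        intro hj
        apply hb
        apply Fin.ext
        simp
        omega
      · simp
    · simp
  · rename_i h
    apply Finset.sum_eq_zero
    intro b _
    split
    · rename_i hb
      simp only [coeff_C_mul, coeff_X_pow]
      rw [if_neg (by have := b.isLt; omega), mul_zero]
    · simp

lemma coeff_mul_high {n m k : ℕ} (hkn : k ≤ n) (hkm : k ≤ m)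
    (p q : Polynomial ℂ) (hn : p.natDegree = n) (hm : q.natDegree = m)
    (c : Fin (n + m - 2 * k) → ℂ) (j : ℕ) (hj : n + m - k ≤ j) :
    (uP n m k c * p + vP n m k c * q).coeff j = 0 := by
  have h1 : (uP n m k c * p).coeff j = 0 := by
    rw [coeff_mul]
    apply Finset.sum_eq_zero
    intro x hmem
    rw [Finset.HasAntidiagonal.mem_antidiagonal] at hmem
    by_cases hi : x.1 < m - k
    · rw [coeff_eq_zero_of_natDegree_lt (show p.natDegree < x.2 by omega), mul_zero]
    · rw [coeff_uP hkn, dif_neg hi, zero_mul]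
  have h2 : (vP n m k c * q).coeff j = 0 := by
    rw [coeff_mul]
    apply Finset.sum_eq_zero
    intro x hmem
    rw [Finset.HasAntidiagonal.mem_antidiagonal] at hmem
    by_cases hi : x.1 < n - k
    · rw [coeff_eq_zero_of_natDegree_lt (show q.natDegree < x.2 by omega), mul_zero]
    · rw [coeff_vP hkm, dif_neg hi, zero_mul]
  rw [coeff_add, h1, h2, add_zero]

lemma vecMul_key {n m k : ℕ} (hkn : k ≤ n) (hkm : k ≤ m)
    (p q : Polynomial ℂ) (hn : p.natDegree = n) (hm : q.natDegree = m)
    (c : Fin (n + m - 2 * k) → ℂ) (s : Fin (n + m - 2 * k)) :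
    Matrix.vecMul c (Matrix.of fun r c' : Fin (n + m - 2 * k) =>
      sylvesterMat n m (fun j => p.coeff j) (fun j => q.coeff j)
        ⟨k + (r : ℕ), by have := r.isLt; omega⟩
        ⟨k + (c' : ℕ), by have := c'.isLt; omega⟩) s
      = (uP n m k c * p + vP n m k c * q).coeff (n + m - 1 - k - (s : ℕ)) := by
  have hs := s.isLt
  rw [coeff_add]
  have hu : (uP n m k c * p).coeff (n + m - 1 - k - (s : ℕ))
      = ∑ r : Fin (n + m - 2 * k), (if (r : ℕ) < m - k then
          c r * (p * X ^ (m - k - 1 - (r : ℕ))).coeff (n + m - 1 - k - (s : ℕ)) else 0) := by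
    unfold uP
    rw [Finset.sum_mul, finset_sum_coeff]
    refine Finset.sum_congr rfl fun r _ => ?_
    split_ifs with h
    · rw [show C (c r) * X ^ (m - k - 1 - (r : ℕ)) * p
          = C (c r) * (p * X ^ (m - k - 1 - (r : ℕ))) by ring, coeff_C_mul]
    · simp
  have hv : (vP n m k c * q).coeff (n + m - 1 - k - (s : ℕ))
      = ∑ r : Fin (n + m - 2 * k), (if m - k ≤ (r : ℕ) then
          c r * (q * X ^ ((r : ℕ) - (m - k))).coeff (n + m - 1 - k - (s : ℕ)) else 0) := by
    unfold vP
    rw [Finset.sum_mul, finset_sum_coeff]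
    refine Finset.sum_congr rfl fun r _ => ?_
    split_ifs with h
    · rw [show C (c r) * X ^ ((r : ℕ) - (m - k)) * q
          = C (c r) * (q * X ^ ((r : ℕ) - (m - k))) by ring, coeff_C_mul]
    · simp
  rw [hu, hv, ← Finset.sum_add_distrib]
  rw [Matrix.vecMul, dotProduct]
  refine Finset.sum_congr rfl fun r _ => ?_
  have hr' := r.isLt
  have hentry : (Matrix.of fun r c' : Fin (n + m - 2 * k) =>
      sylvesterMat n m (fun j => p.coeff j) (fun j => q.coeff j)
        ⟨k + (r : ℕ), by have := r.isLt; omega⟩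
        ⟨k + (c' : ℕ), by have := c'.isLt; omega⟩) r s
      = (if k + (r : ℕ) < m then
          (if k + (r : ℕ) ≤ k + (s : ℕ) ∧ k + (s : ℕ) ≤ k + (r : ℕ) + n then
            p.coeff (n - (k + (s : ℕ) - (k + (r : ℕ)))) else 0)
        else
          (if n - 1 - (k + (r : ℕ) - m) ≤ k + (s : ℕ) ∧ k + (s : ℕ) ≤ n - 1 - (k + (r : ℕ) - m) + m then
            q.coeff (m + n - 1 - (k + (r : ℕ) - m) - (k + (s : ℕ))) else 0)) := rfl
  rw [hentry]
  simp only [coeff_mul_X_pow']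
  split_ifs with hA hB hD hF hE hD hF hE hA' hE hG hE hG
  all_goals try simp only [mul_zero, add_zero, zero_add, mul_ite, mul_one]
  all_goals try rfl
  all_goals try (exfalso; omega)
  all_goals try (congr 2 <;> omega)
  all_goals try (rw [coeff_eq_zero_of_natDegree_lt (by omega)]; ring)

lemma gcd_facts (p q : Polynomial ℂ) (hp : p ≠ 0) (hq : q ≠ 0) :
    ∃ p₁ q₁ : Polynomial ℂ, p = EuclideanDomain.gcd p q * p₁ ∧
      q = EuclideanDomain.gcd p q * q₁ ∧ p₁ ≠ 0 ∧ q₁ ≠ 0 ∧ IsCoprime p₁ q₁ := by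
  set g := EuclideanDomain.gcd p q with hg
  have hg0 : g ≠ 0 := fun h => hp (EuclideanDomain.gcd_eq_zero_iff.mp h).1
  obtain ⟨p₁, hp₁⟩ := EuclideanDomain.gcd_dvd_left p q
  obtain ⟨q₁, hq₁⟩ := EuclideanDomain.gcd_dvd_right p q
  refine ⟨p₁, q₁, hp₁, hq₁, fun h => hp (by rw [hp₁, h, mul_zero]),
    fun h => hq (by rw [hq₁, h, mul_zero]), ?_⟩
  have hbez := EuclideanDomain.gcd_eq_gcd_ab p q
  refine ⟨EuclideanDomain.gcdA p q, EuclideanDomain.gcdB p q, ?_⟩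
  apply mul_left_cancel₀ hg0
  rw [mul_one]
  calc g * (EuclideanDomain.gcdA p q * p₁ + EuclideanDomain.gcdB p q * q₁)
      = (EuclideanDomain.gcd p q * p₁) * EuclideanDomain.gcdA p q
          + (EuclideanDomain.gcd p q * q₁) * EuclideanDomain.gcdB p q := by rw [hg]; ring
    _ = p * EuclideanDomain.gcdA p q + q * EuclideanDomain.gcdB p q := by
        rw [← hp₁, ← hq₁]
    _ = g := hbez.symm

lemma subres_zero_of_lt (p q : Polynomial ℂ) (n m k : ℕ)
    (hn : p.natDegree = n) (hm : q.natDegree = m) (hp : p ≠ 0) (hq : q ≠ 0)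
    (hk : k < (EuclideanDomain.gcd p q).natDegree) :
    subresultant n m (fun j => p.coeff j) (fun j => q.coeff j) k = 0 := by
  set g := EuclideanDomain.gcd p q with hg
  have hg0 : g ≠ 0 := fun h => hp (EuclideanDomain.gcd_eq_zero_iff.mp h).1
  obtain ⟨p₁, q₁, hp₁, hq₁, hp₁0, hq₁0, _⟩ := gcd_facts p q hp hq
  have hdp : n = g.natDegree + p₁.natDegree := by
    rw [← hn, hp₁, natDegree_mul hg0 hp₁0]
  have hdq : m = g.natDegree + q₁.natDegree := by
    rw [← hm, hq₁, natDegree_mul hg0 hq₁0]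
  have hkn : k ≤ n := by omega
  have hkm : k ≤ m := by omega
  set c : Fin (n + m - 2 * k) → ℂ := fun r =>
    if (r : ℕ) < m - k then q₁.coeff (m - k - 1 - (r : ℕ))
    else -(p₁.coeff ((r : ℕ) - (m - k))) with hc
  have hu : uP n m k c = q₁ := by
    ext j
    rw [coeff_uP hkn]
    split
    · rename_i h
      simp only [hc]
      rw [if_pos (show m - k - 1 - j < m - k by omega)]
      congr 1
      omega
    · rename_i h
      exact (coeff_eq_zero_of_natDegree_lt (by omega)).symm
  have hv : vP n m k c = -p₁ := by
    ext j
    rw [coeff_vP hkm, coeff_neg]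
    split
    · rename_i h
      simp only [hc]
      rw [if_neg (show ¬ (m - k + j < m - k) by omega)]
      congr 2
      omega
    · rename_i h
      rw [coeff_eq_zero_of_natDegree_lt (by omega), neg_zero]
  have hc0 : c ≠ 0 := by
    intro h
    apply hq₁0
    rw [← hu, h]
    unfold uP
    apply Finset.sum_eq_zero
    intro r _
    split
    · rw [Pi.zero_apply, map_zero, zero_mul]
    · rfl
  unfold subresultant
  rw [← Matrix.exists_vecMul_eq_zero_iff]
  refine ⟨c, hc0, ?_⟩
  funext s
  show Matrix.vecMul c _ s = 0
  rw [vecMul_key hkn hkm p q hn hm c s, hu, hv]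
  have hzero : q₁ * p + -p₁ * q = 0 := by
    calc q₁ * p + -p₁ * q
        = q₁ * (EuclideanDomain.gcd p q * p₁) + -p₁ * (EuclideanDomain.gcd p q * q₁) := by
          rw [← hp₁, ← hq₁]
      _ = 0 := by ring
  rw [hzero, coeff_zero]

lemma subres_ne_zero (p q : Polynomial ℂ) (n m : ℕ)
    (hn : p.natDegree = n) (hm : q.natDegree = m) (hp : p ≠ 0) (hq : q ≠ 0) :
    subresultant n m (fun j => p.coeff j) (fun j => q.coeff j)
      (EuclideanDomain.gcd p q).natDegree ≠ 0 := by
  set g := EuclideanDomain.gcd p q with hg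
  set k := g.natDegree with hkdef
  have hg0 : g ≠ 0 := fun h => hp (EuclideanDomain.gcd_eq_zero_iff.mp h).1
  obtain ⟨p₁, q₁, hp₁, hq₁, hp₁0, hq₁0, hco⟩ := gcd_facts p q hp hq
  have hdp : n = k + p₁.natDegree := by
    rw [← hn, hp₁, natDegree_mul hg0 hp₁0]
  have hdq : m = k + q₁.natDegree := by
    rw [← hm, hq₁, natDegree_mul hg0 hq₁0]
  have hkn : k ≤ n := by omega
  have hkm : k ≤ m := by omega
  unfold subresultant
  intro hdet
  obtain ⟨c, hc0, hcM⟩ := Matrix.exists_vecMul_eq_zero_iff.mpr hdet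
  by_cases hN : n + m - 2 * k = 0
  · exact hc0 (funext fun r => absurd r.isLt (by omega))
  have hcoeff : ∀ j, k ≤ j → (uP n m k c * p + vP n m k c * q).coeff j = 0 := by
    intro j hj
    by_cases hjle : j ≤ n + m - 1 - k
    · have hsN : n + m - 1 - k - j < n + m - 2 * k := by omega
      have := congrFun hcM ⟨n + m - 1 - k - j, hsN⟩
      rw [Pi.zero_apply] at this
      rw [vecMul_key hkn hkm p q hn hm c ⟨n + m - 1 - k - j, hsN⟩] at this
      have hidx : n + m - 1 - k - ((⟨n + m - 1 - k - j, hsN⟩ :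
          Fin (n + m - 2 * k)) : ℕ) = j := by
        show n + m - 1 - k - (n + m - 1 - k - j) = j
        omega
      rw [hidx] at this
      exact this
    · exact coeff_mul_high hkn hkm p q hn hm c j (by omega)
  have hdvd : g ∣ uP n m k c * p + vP n m k c * q := by
    refine dvd_add ?_ ?_
    · exact Dvd.dvd.mul_left ⟨p₁, hp₁⟩ _
    · exact Dvd.dvd.mul_left ⟨q₁, hq₁⟩ _
  have hh0 : uP n m k c * p + vP n m k c * q = 0 := by
    by_contra hh
    have h1 : k ≤ (uP n m k c * p + vP n m k c * q).natDegree :=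
      natDegree_le_of_dvd hdvd hh
    exact leadingCoeff_ne_zero.mpr hh (hcoeff _ h1)
  have hcancel : uP n m k c * p₁ + vP n m k c * q₁ = 0 := by
    apply mul_left_cancel₀ hg0
    rw [mul_zero]
    calc g * (uP n m k c * p₁ + vP n m k c * q₁)
        = uP n m k c * (g * p₁) + vP n m k c * (g * q₁) := by ring
      _ = 0 := by rw [← hp₁, ← hq₁]; exact hh0
  have hu0 : uP n m k c = 0 := by
    by_contra hu
    have hmk : 1 ≤ m - k := by
      by_contra hmk
      apply hu
      ext j
      rw [coeff_uP hkn, dif_neg (by omega), coeff_zero]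
    have hdvdu : q₁ ∣ uP n m k c := by
      refine (hco.symm).dvd_of_dvd_mul_right ⟨-(vP n m k c), ?_⟩
      linear_combination hcancel
    have h1 : q₁.natDegree ≤ (uP n m k c).natDegree := natDegree_le_of_dvd hdvdu hu
    have h2 : (uP n m k c).natDegree ≤ m - k - 1 := by
      apply natDegree_le_iff_coeff_eq_zero.mpr
      intro j hj
      rw [coeff_uP hkn, dif_neg (by omega)]
    omega
  have hv0 : vP n m k c = 0 := by
    have : vP n m k c * q = 0 := by
      have := hh0
      rw [hu0, zero_mul, zero_add] at this
      exact this
    rcases mul_eq_zero.mp this with h | h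
    · exact h
    · exact absurd h hq
  apply hc0
  funext r
  rw [Pi.zero_apply]
  by_cases hr : (r : ℕ) < m - k
  · have := congrArg (fun f => Polynomial.coeff f (m - k - 1 - (r : ℕ))) hu0
    simp only [coeff_zero] at this
    rw [coeff_uP hkn, dif_pos (show m - k - 1 - (r : ℕ) < m - k by omega)] at this
    have hfin : (⟨m - k - 1 - (m - k - 1 - (r : ℕ)), by omega⟩ :
        Fin (n + m - 2 * k)) = r := by
      apply Fin.ext
      show m - k - 1 - (m - k - 1 - (r : ℕ)) = (r : ℕ)
      omega
    rw [hfin] at this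
    exact this
  · have hrn : (r : ℕ) - (m - k) < n - k := by have := r.isLt; omega
    have := congrArg (fun f => Polynomial.coeff f ((r : ℕ) - (m - k))) hv0
    simp only [coeff_zero] at this
    rw [coeff_vP hkm, dif_pos hrn] at this
    have hfin : (⟨m - k + ((r : ℕ) - (m - k)), by omega⟩ :
        Fin (n + m - 2 * k)) = r := by
      apply Fin.ext
      show m - k + ((r : ℕ) - (m - k)) = (r : ℕ)
      omega
    rw [hfin] at this
    exact this

end SubresAux

/-- Let `p, q ∈ ℂ[x]` with degrees `n` and `m` and nonzero
leading coefficients.  For `k ≤ (n+m)/2`, the polynomials `p` and `q` have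
exactly `k` common roots counting multiplicity (i.e. `deg gcd(p,q) = k`) iff
`R₀ = ⋯ = R_{k-1} = 0` and `R_k ≠ 0`. -/
theorem subresultant_gcd_degree
    (p q : Polynomial ℂ) (n m k : ℕ)
    (hn : p.natDegree = n) (hm : q.natDegree = m)
    (hlc : p.leadingCoeff * q.leadingCoeff ≠ 0)
    (hk : k ≤ (n + m) / 2) :
    (EuclideanDomain.gcd p q).natDegree = k ↔
      ((∀ i < k, subresultant n m (fun j => p.coeff j) (fun j => q.coeff j) i = 0) ∧
        subresultant n m (fun j => p.coeff j) (fun j => q.coeff j) k ≠ 0) := by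
  have hp : p ≠ 0 := by
    intro h
    apply hlc
    rw [h, Polynomial.leadingCoeff_zero, zero_mul]
  have hq : q ≠ 0 := by
    intro h
    apply hlc
    rw [h, Polynomial.leadingCoeff_zero, mul_zero]
  constructor
  · intro hdk
    constructor
    · intro i hi
      exact SubresAux.subres_zero_of_lt p q n m i hn hm hp hq (by omega)
    · rw [← hdk]
      exact SubresAux.subres_ne_zero p q n m hn hm hp hq
  · rintro ⟨h0, hK⟩
    rcases lt_trichotomy (EuclideanDomain.gcd p q).natDegree k with h | h | h
    · exact absurd (h0 _ h) (SubresAux.subres_ne_zero p q n m hn hm hp hq)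
    · exact h
    · exact absurd (SubresAux.subres_zero_of_lt p q n m k hn hm hp hq h) hK
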